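/- Let c ≥ 4 and a = √(2c - 4). The function ρ(x) = (1/(4π))·[arctan((-c(x-4) - 8)/((c-4)·√(2c - 4 - x²))) + arctan((c(x+4) - 8)/((c-4)·√(2c - 4 - x²)))] for |x| < a (and ρ(x) = 0 for |x| ≥ a) satisfies: ρ is even, 0 ≤ ρ(x) ≤ 1/2 for all x, and ρ is continuous on (-a, a). -/

import Mathlib

open Real

theorem limit_density_properties (c : ℝ) (hc : 4 < c) (a : ℝ)
    (ha : a = Real.sqrt (2*c - 4)) :
    let ρ : ℝ → ℝ := fun x =>
      if |x| < a then
        (1/(4*π)) * (Real.arctan ((-c*(x-4) - 8)/((c-4) * Real.sqrt (2*c - 4 - x^2)))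
          + Real.arctan ((c*(x+4) - 8)/((c-4) * Real.sqrt (2*c - 4 - x^2))))
      else 0
    (∀ x : ℝ, ρ (-x) = ρ x) ∧
    (∀ x : ℝ, 0 ≤ ρ x ∧ ρ x ≤ 1/2) ∧
    ContinuousOn ρ (Set.Ioo (-a) a) := by
  intro ρ
  have hc4 : (0:ℝ) < c - 4 := by linarith
  have h2c : (0:ℝ) < 2*c - 4 := by linarith
  have ha2 : a^2 = 2*c - 4 := by rw [ha]; exact Real.sq_sqrt h2c.le
  have hpi := Real.pi_pos
  have hsq : ∀ x : ℝ, |x| < a → 0 < 2*c - 4 - x^2 := by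
    intro x hx
    have : x^2 < a^2 := by
      rw [← sq_abs]
      exact pow_lt_pow_left₀ hx (abs_nonneg x) (by norm_num)
    linarith
  refine ⟨?_, ?_, ?_⟩
  · intro x
    simp only [ρ, abs_neg, neg_sq]
    have e1 : -c*(-x-4) - 8 = c*(x+4) - 8 := by ring
    have e2 : c*(-x+4) - 8 = -c*(x-4) - 8 := by ring
    rw [e1, e2, add_comm]
  · intro x
    by_cases hx : |x| < a
    · have hD : 0 < (c-4) * Real.sqrt (2*c - 4 - x^2) :=
        mul_pos hc4 (Real.sqrt_pos.mpr (hsq x hx))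
      set A : ℝ := (-c*(x-4) - 8)/((c-4) * Real.sqrt (2*c - 4 - x^2)) with hA
      set B : ℝ := (c*(x+4) - 8)/((c-4) * Real.sqrt (2*c - 4 - x^2)) with hB
      have hsum : 0 ≤ A + B := by
        rw [hA, hB, ← add_div]
        apply div_nonneg _ hD.le
        linarith
      have hge : -B ≤ A := by linarith
      have h1 : -Real.arctan B ≤ Real.arctan A := by
        rw [← Real.arctan_neg]
        exact arctan_strictMono.monotone hge
      have h2 : Real.arctan A < π/2 := Real.arctan_lt_pi_div_two A
      have h3 : Real.arctan B < π/2 := Real.arctan_lt_pi_div_two B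
      have hρ : ρ x = (1/(4*π)) * (Real.arctan A + Real.arctan B) := by
        simp only [ρ, if_pos hx]
        rfl
      constructor
      · rw [hρ]
        apply mul_nonneg (by positivity)
        linarith
      · rw [hρ]
        have : (1/(4*π)) * (Real.arctan A + Real.arctan B) ≤ (1/(4*π)) * π := by
          apply mul_le_mul_of_nonneg_left (by linarith) (by positivity)
        have hπ : (1/(4*π)) * π = 1/4 := by field_simp
        linarith
    · simp only [ρ, if_neg hx]
      norm_num
  · have heq : Set.EqOn ρ (fun x => (1/(4*π)) *
        (Real.arctan ((-c*(x-4) - 8)/((c-4) * Real.sqrt (2*c - 4 - x^2)))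
          + Real.arctan ((c*(x+4) - 8)/((c-4) * Real.sqrt (2*c - 4 - x^2)))))
        (Set.Ioo (-a) a) := by
      intro x hx
      have : |x| < a := abs_lt.mpr ⟨hx.1, hx.2⟩
      simp only [ρ, if_pos this]
    apply ContinuousOn.congr _ heq
    have hden : ∀ x ∈ Set.Ioo (-a) a, (c-4) * Real.sqrt (2*c - 4 - x^2) ≠ 0 := by
      intro x hx
      have : |x| < a := abs_lt.mpr ⟨hx.1, hx.2⟩
      exact ne_of_gt (mul_pos hc4 (Real.sqrt_pos.mpr (hsq x this)))
    have hdenc : ContinuousOn (fun x : ℝ => (c-4) * Real.sqrt (2*c - 4 - x^2))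
        (Set.Ioo (-a) a) :=
      (continuous_const.mul (Real.continuous_sqrt.comp (by continuity))).continuousOn
    apply ContinuousOn.mul continuousOn_const
    apply ContinuousOn.add
    · exact Real.continuous_arctan.comp_continuousOn
        (ContinuousOn.div (by fun_prop) hdenc hden)
    · exact Real.continuous_arctan.comp_continuousOn
        (ContinuousOn.div (by fun_prop) hdenc hden)
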